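/- For every rational t with t ∉ {-1, 0, 1}, the rationals a = 18t(t-1)(t+1)/((t^2-6t+1)(t^2+6t+1)), b = (t-1)(t^2+6t+1)^2/(6t(t+1)(t^2-6t+1)), c = (t+1)(t^2-6t+1)^2/(6t(t-1)(t^2+6t+1)) satisfy: ab+1, ac+1, and bc+1 are each squares of rational numbers, provided the denominators are nonzero (i.e., t^2-6t+1 ≠ 0 and t^2+6t+1 ≠ 0, which holds automatically for rational t). -/

import Mathlib

theorem parametric_triple_is_diophantine (t : ℚ)
    (ht : t ≠ -1 ∧ t ≠ 0 ∧ t ≠ 1)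
    (h1 : t^2 - 6*t + 1 ≠ 0) (h2 : t^2 + 6*t + 1 ≠ 0) :
    (∃ q : ℚ, (18*t*(t-1)*(t+1) / ((t^2-6*t+1)*(t^2+6*t+1)))
        * ((t-1)*(t^2+6*t+1)^2 / (6*t*(t+1)*(t^2-6*t+1))) + 1 = q ^ 2) ∧
    (∃ q : ℚ, (18*t*(t-1)*(t+1) / ((t^2-6*t+1)*(t^2+6*t+1)))
        * ((t+1)*(t^2-6*t+1)^2 / (6*t*(t-1)*(t^2+6*t+1))) + 1 = q ^ 2) ∧
    (∃ q : ℚ, ((t-1)*(t^2+6*t+1)^2 / (6*t*(t+1)*(t^2-6*t+1)))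
        * ((t+1)*(t^2-6*t+1)^2 / (6*t*(t-1)*(t^2+6*t+1))) + 1 = q ^ 2) := by
  obtain ⟨hm1, h0, hp1⟩ := ht
  have ht0 : t ≠ 0 := h0
  have htm : t - 1 ≠ 0 := sub_ne_zero.mpr hp1
  have htp : t + 1 ≠ 0 := fun h => hm1 (by linarith [eq_neg_of_add_eq_zero_left h])
  have h1' : t * (t - 6) + 1 ≠ 0 := by convert h1 using 1; ring
  have h2' : t * (t + 6) + 1 ≠ 0 := by convert h2 using 1; ring
  refine ⟨⟨2*(t^2+1)/(t^2-6*t+1), ?_⟩, ⟨2*(t^2+1)/(t^2+6*t+1), ?_⟩,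
    ⟨(t^2+1)/(6*t), ?_⟩⟩ <;> field_simp <;> ring
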